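/- Let (X_n) be a transient Markov chain on a countable state space started at x, and let K be a finite set of states. Define A_K = {z : P_z[H_K < ∞] ≥ 1/2}, where H_K is the hitting time of K. Then almost surely the chain visits A_K only finitely many times. -/

import Mathlib

open MeasureTheory

private lemma meas_coord_eq {α : Type*} [MeasurableSpace α] [MeasurableSingletonClass α]
    (i : ℕ) (a : α) : MeasurableSet {v : ℕ → α | v i = a} := by
  have h : {v : ℕ → α | v i = a} = (fun v : ℕ → α => v i) ⁻¹' {a} := rfl
  rw [h]
  exact measurable_pi_apply i (measurableSet_singleton a)

/-- Markov property conditioned on a full cylinder (proved by induction from the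
one-point Markov property). -/
theorem markov_cyl {α : Type*} [MeasurableSpace α] [MeasurableSingletonClass α]
    (μ : α → Measure (ℕ → α))
    (hmarkov : ∀ (z : α) (n : ℕ) (y : α) (S : Set (ℕ → α)), MeasurableSet S →
      μ z {w | w n = y ∧ (fun k => w (n + k)) ∈ S} = μ z {w | w n = y} * μ y S)
    (z : α) (n : ℕ) :
    ∀ (c : ℕ → α) (S : Set (ℕ → α)), MeasurableSet S →
      μ z {w | (∀ i ≤ n, w i = c i) ∧ (fun k => w (n + k)) ∈ S}
        = μ z {w | ∀ i ≤ n, w i = c i} * μ (c n) S := by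
  induction n with
  | zero =>
    intro c S hS
    have e1 : {w : ℕ → α | (∀ i ≤ 0, w i = c i) ∧ (fun k => w (0 + k)) ∈ S}
        = {w | w 0 = c 0 ∧ (fun k => w (0 + k)) ∈ S} := by
      ext w; simp [Nat.le_zero]
    have e2 : {w : ℕ → α | ∀ i ≤ 0, w i = c i} = {w | w 0 = c 0} := by
      ext w; simp [Nat.le_zero]
    rw [e1, e2, hmarkov z 0 (c 0) S hS]
  | succ n ih =>
    intro c S hS
    have hone : MeasurableSet {v : ℕ → α | v 1 = c (n+1)} := meas_coord_eq 1 (c (n+1))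
    have hshift : Measurable fun (v : ℕ → α) => (fun k => v (1 + k)) :=
      measurable_pi_lambda _ fun k => measurable_pi_apply _
    have hS' : MeasurableSet {v : ℕ → α | v 1 = c (n+1) ∧ (fun k => v (1 + k)) ∈ S} :=
      hone.inter (hshift hS)
    have e1 : {w : ℕ → α | (∀ i ≤ n + 1, w i = c i) ∧ (fun k => w (n + 1 + k)) ∈ S}
        = {w | (∀ i ≤ n, w i = c i) ∧ (fun k => w (n + k)) ∈
            {v | v 1 = c (n+1) ∧ (fun k => v (1 + k)) ∈ S}} := by
      ext w
      simp only [Set.mem_setOf_eq]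
      have hf : (fun k => w (n + (1 + k))) = fun k => w (n + 1 + k) := by
        funext k; congr 1; omega
      constructor
      · rintro ⟨h1, h2⟩
        refine ⟨fun i hi => h1 i (hi.trans (Nat.le_succ n)), h1 (n+1) le_rfl, ?_⟩
        rw [hf]; exact h2
      · rintro ⟨h1, h2, h3⟩
        refine ⟨?_, ?_⟩
        · intro i hi
          rcases Nat.lt_or_ge i (n+1) with h | h
          · exact h1 i (Nat.lt_succ_iff.mp h)
          · have : i = n + 1 := le_antisymm hi h
            rw [this]; exact h2
        · rw [← hf]; exact h3
    have e2 : {w : ℕ → α | ∀ i ≤ n + 1, w i = c i}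
        = {w | (∀ i ≤ n, w i = c i) ∧ (fun k => w (n + k)) ∈ {v : ℕ → α | v 1 = c (n+1)}} := by
      ext w
      simp only [Set.mem_setOf_eq]
      constructor
      · intro h1
        exact ⟨fun i hi => h1 i (hi.trans (Nat.le_succ n)), h1 (n+1) le_rfl⟩
      · rintro ⟨h1, h2⟩
        intro i hi
        rcases Nat.lt_or_ge i (n+1) with h | h
        · exact h1 i (Nat.lt_succ_iff.mp h)
        · have : i = n + 1 := le_antisymm hi h
          rw [this]; exact h2
    rw [e1, ih c _ hS', hmarkov (c n) 1 (c (n+1)) S hS, e2, ih c _ hone, mul_assoc]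

/-- Markov property conditioned on any event determined by the first `m+1`
coordinates that forces `w m = y`. -/
theorem markov_det {α : Type*} [Countable α] [MeasurableSpace α] [MeasurableSingletonClass α]
    (μ : α → Measure (ℕ → α))
    (hmarkov : ∀ (z : α) (n : ℕ) (y : α) (S : Set (ℕ → α)), MeasurableSet S →
      μ z {w | w n = y ∧ (fun k => w (n + k)) ∈ S} = μ z {w | w n = y} * μ y S)
    (z : α) (m : ℕ) (y : α) (D : Set (ℕ → α))
    (hD : ∀ w w' : ℕ → α, (∀ i ≤ m, w i = w' i) → w ∈ D → w' ∈ D)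
    (hDy : ∀ w ∈ D, w m = y) (S : Set (ℕ → α)) (hS : MeasurableSet S) :
    μ z {w | w ∈ D ∧ (fun k => w (m + k)) ∈ S} = μ z D * μ y S := by
  classical
  set ex : (Fin (m+1) → α) → (ℕ → α) := fun c i => c ⟨min i m, by omega⟩ with hex
  set cyl : (Fin (m+1) → α) → Set (ℕ → α) := fun c => {w | ∀ i ≤ m, w i = ex c i} with hcyl
  have hagree : ∀ (w : ℕ → α) (i : ℕ), i ≤ m → ex (fun j => w j) i = w i := by
    intro w i hi
    simp only [hex]
    congr 1
    omega
  have hcylmem : ∀ (c : Fin (m+1) → α) (w : ℕ → α), w ∈ cyl c → ∀ i ≤ m, w i = ex c i :=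
    fun c w h => h
  -- D is the disjoint union of the cylinders of its prefixes
  have hDeq : D = ⋃ c : {c : Fin (m+1) → α // ex c ∈ D}, cyl c.1 := by
    ext w
    constructor
    · intro hw
      refine Set.mem_iUnion.mpr ⟨⟨fun j => w j, ?_⟩, ?_⟩
      · exact hD w (ex fun j => w j) (fun i hi => (hagree w i hi).symm) hw
      · intro i hi; exact (hagree w i hi).symm
    · intro hw
      obtain ⟨c, hc⟩ := Set.mem_iUnion.mp hw
      exact hD (ex c.1) w (fun i hi => (hc i hi).symm) c.2
  have hcylmeas : ∀ c : Fin (m+1) → α, MeasurableSet (cyl c) := by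
    intro c
    have : cyl c = ⋂ i ∈ Set.Iic m, {w : ℕ → α | w i = ex c i} := by
      ext w; simp [hcyl, Set.mem_setOf_eq]
    rw [this]
    exact MeasurableSet.biInter (Set.to_countable _) (fun i _ => meas_coord_eq i (ex c i))
  have hcyldisj : Pairwise (Function.onFun Disjoint fun c : {c : Fin (m+1) → α // ex c ∈ D} => cyl c.1) := by
    intro c c' hne
    rw [Function.onFun, Set.disjoint_left]
    intro w hc hc'
    apply hne
    apply Subtype.ext
    funext i
    have h1 : w i.1 = ex c.1 i.1 := hc i.1 (by omega)
    have h2 : w i.1 = ex c'.1 i.1 := hc' i.1 (by omega)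
    have hilt := i.isLt
    have hfin : (⟨min i.1 m, by omega⟩ : Fin (m+1)) = i := Fin.ext (by simp; omega)
    have e1 : ex c.1 i.1 = c.1 i := by
      simp only [hex]; rw [hfin]
    have e2 : ex c'.1 i.1 = c'.1 i := by
      simp only [hex]; rw [hfin]
    rw [← e1, ← e2, ← h1, ← h2]
  have hshiftm : Measurable fun (w : ℕ → α) => (fun k => w (m + k)) :=
    measurable_pi_lambda _ fun k => measurable_pi_apply _
  -- decompose the left side
  have hLeq : {w | w ∈ D ∧ (fun k => w (m + k)) ∈ S}
      = ⋃ c : {c : Fin (m+1) → α // ex c ∈ D},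
          {w | (∀ i ≤ m, w i = ex c.1 i) ∧ (fun k => w (m + k)) ∈ S} := by
    ext w
    simp only [Set.mem_setOf_eq, Set.mem_iUnion]
    constructor
    · rintro ⟨hw, hs⟩
      have := hDeq ▸ hw
      obtain ⟨c, hc⟩ := Set.mem_iUnion.mp this
      exact ⟨c, hc, hs⟩
    · rintro ⟨c, hc, hs⟩
      refine ⟨?_, hs⟩
      rw [hDeq]
      exact Set.mem_iUnion.mpr ⟨c, hc⟩
  have hterm : ∀ c : {c : Fin (m+1) → α // ex c ∈ D},
      μ z {w | (∀ i ≤ m, w i = ex c.1 i) ∧ (fun k => w (m + k)) ∈ S}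
        = μ z (cyl c.1) * μ y S := by
    intro c
    have hy : ex c.1 m = y := hDy _ c.2
    have := markov_cyl μ hmarkov z m (ex c.1) S hS
    rw [hy] at this
    exact this
  have hDval : μ z D = ∑' c : {c : Fin (m+1) → α // ex c ∈ D}, μ z (cyl c.1) := by
    conv_lhs => rw [hDeq]
    exact measure_iUnion hcyldisj (fun c => hcylmeas c.1)
  have hdisj2 : Pairwise (Function.onFun Disjoint fun c : {c : Fin (m+1) → α // ex c ∈ D} =>
      {w : ℕ → α | (∀ i ≤ m, w i = ex c.1 i) ∧ (fun k => w (m + k)) ∈ S}) := by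
    intro c c' hne
    have := hcyldisj hne
    rw [Function.onFun] at this ⊢
    refine Disjoint.mono ?_ ?_ this
    · intro w hw; exact hw.1
    · intro w hw; exact hw.1
  have hmeas2 : ∀ c : {c : Fin (m+1) → α // ex c ∈ D},
      MeasurableSet {w : ℕ → α | (∀ i ≤ m, w i = ex c.1 i) ∧ (fun k => w (m + k)) ∈ S} := by
    intro c
    exact (hcylmeas c.1).inter (hshiftm hS)
  rw [hLeq, measure_iUnion hdisj2 hmeas2, hDval, ← ENNReal.tsum_mul_right]
  exact tsum_congr hterm

/-- Let `(μ_z)` be the path-space laws of a transient Markov chain on a countable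
state space (Markov property at deterministic times, each state visited finitely
often a.s.). For a finite set `K`, the set `A_K = {z : P_z[H_K < ∞] ≥ 1/2}` is
almost surely visited only finitely many times by the chain started at `x`. -/
theorem stmt9 {α : Type*} [Countable α] [MeasurableSpace α]
    [MeasurableSingletonClass α]
    (μ : α → Measure (ℕ → α)) (hprob : ∀ z, IsProbabilityMeasure (μ z))
    (hstart : ∀ z, μ z {w | w 0 = z} = 1)
    (hmarkov : ∀ (z : α) (n : ℕ) (y : α) (S : Set (ℕ → α)), MeasurableSet S →
      μ z {w | w n = y ∧ (fun k => w (n + k)) ∈ S} = μ z {w | w n = y} * μ y S)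
    (htrans : ∀ z y : α, μ z {w | {n | w n = y}.Infinite} = 0)
    (x : α) (K : Set α) (hK : K.Finite) :
    μ x {w | {n | (1 : ENNReal) / 2 ≤ μ (w n) {w' | ∃ m, w' m ∈ K}}.Infinite} = 0 := by
  classical
  set hit : Set (ℕ → α) := {w' | ∃ m, w' m ∈ K} with hhit
  set A : Set α := {z | (1 : ENNReal) / 2 ≤ μ z hit} with hA
  have hmeasK : MeasurableSet K := (Set.to_countable K).measurableSet
  have hmeashit : MeasurableSet hit := by
    have : hit = ⋃ m, (fun w : ℕ → α => w m) ⁻¹' K := by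
      ext w; simp [hhit]
    rw [this]
    exact MeasurableSet.iUnion fun m => measurable_pi_apply m hmeasK
  have hmeasA : MeasurableSet A := (Set.to_countable A).measurableSet
  set G : ℕ → Set (ℕ → α) := fun n => {w | ∃ m, n ≤ m ∧ w m ∈ K} with hG
  have hGmeas : ∀ n, MeasurableSet (G n) := by
    intro n
    have : G n = ⋃ m, ⋃ _ : n ≤ m, (fun w : ℕ → α => w m) ⁻¹' K := by
      ext w; simp [hG]
    rw [this]
    exact MeasurableSet.iUnion fun m => MeasurableSet.iUnion fun _ =>
      measurable_pi_apply m hmeasK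
  have hGanti : Antitone G := by
    intro a b hab w hw
    obtain ⟨m, hm, hmK⟩ := hw
    exact ⟨m, hab.trans hm, hmK⟩
  -- the target set
  set T : Set (ℕ → α) := {w | {n | w n ∈ A}.Infinite} with hT
  have hgoal : {w : ℕ → α | {n | (1 : ENNReal) / 2 ≤ μ (w n) hit}.Infinite} = T := rfl
  rw [hgoal]
  -- first-entrance decomposition sets
  set C : ℕ → ℕ × α → Set (ℕ → α) := fun n p =>
    {w | n ≤ p.1 ∧ p.2 ∈ A ∧ w p.1 = p.2 ∧ ∀ k, n ≤ k → k < p.1 → w k ∉ A} with hC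
  have hCmeas : ∀ n p, MeasurableSet (C n p) := by
    intro n p
    have : C n p = {w : ℕ → α | n ≤ p.1} ∩ ({w | p.2 ∈ A} ∩
        (((fun w : ℕ → α => w p.1) ⁻¹' {p.2}) ∩
          ⋂ k, ⋂ _ : n ≤ k, ⋂ _ : k < p.1, (fun w : ℕ → α => w k) ⁻¹' Aᶜ)) := by
      ext w; simp [hC, Set.mem_setOf_eq]
    rw [this]
    refine (MeasurableSet.const _).inter ((MeasurableSet.const _).inter
      (((measurable_pi_apply p.1 (measurableSet_singleton p.2))).inter ?_))
    exact MeasurableSet.iInter fun k => MeasurableSet.iInter fun _ =>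
      MeasurableSet.iInter fun _ => measurable_pi_apply k hmeasA.compl
  have hCdisj : ∀ n, Pairwise (Function.onFun Disjoint (C n)) := by
    intro n p q hne
    rw [Function.onFun, Set.disjoint_left]
    intro w hp hq
    obtain ⟨hnp, hpA, hpw, hpmin⟩ := hp
    obtain ⟨hnq, hqA, hqw, hqmin⟩ := hq
    rcases Nat.lt_trichotomy p.1 q.1 with h | h | h
    · exact hqmin p.1 hnp h (hpw ▸ hpA)
    · apply hne
      have : p.2 = q.2 := by rw [← hpw, ← hqw, h]
      exact Prod.ext h this
    · exact hpmin q.1 hnq h (hqw ▸ hqA)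
  have hTsub : ∀ n, T ⊆ ⋃ p : ℕ × α, C n p := by
    intro n w hw
    have hex : ∃ m, n ≤ m ∧ w m ∈ A := by
      obtain ⟨m, hm, hlt⟩ := hw.exists_gt n
      exact ⟨m, hlt.le, hm⟩
    let m0 := Nat.find hex
    obtain ⟨hm0n, hm0A⟩ := Nat.find_spec hex
    refine Set.mem_iUnion.mpr ⟨(m0, w m0), hm0n, hm0A, rfl, ?_⟩
    intro k hnk hk hkA
    exact Nat.find_min hex hk ⟨hnk, hkA⟩
  -- key inequality: μ x T * (1/2) ≤ μ x (G n)
  have hkey : ∀ n, μ x T * ((1 : ENNReal) / 2) ≤ μ x (G n) := by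
    intro n
    have hterm : ∀ p : ℕ × α, μ x (C n p) * ((1 : ENNReal) / 2)
        ≤ μ x {w | w ∈ C n p ∧ (fun k => w (p.1 + k)) ∈ hit} := by
      intro p
      rcases Set.eq_empty_or_nonempty (C n p) with he | hne
      · rw [he]; simp
      · obtain ⟨w0, hw0⟩ := hne
        have hpA : p.2 ∈ A := hw0.2.1
        have hmd := markov_det μ hmarkov x p.1 p.2 (C n p) ?_ ?_ hit hmeashit
        · rw [hmd]
          exact mul_le_mul_right hpA _
        · intro w w' hag hw
          obtain ⟨h1, h2, h3, h4⟩ := hw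
          refine ⟨h1, h2, ?_, ?_⟩
          · rw [← hag p.1 le_rfl]; exact h3
          · intro k hnk hk
            rw [← hag k hk.le]
            exact h4 k hnk hk
        · intro w hw; exact hw.2.2.1
    have hsubG : ∀ p : ℕ × α, {w | w ∈ C n p ∧ (fun k => w (p.1 + k)) ∈ hit} ⊆ G n := by
      rintro p w ⟨hw, j, hj⟩
      exact ⟨p.1 + j, le_trans hw.1 (Nat.le_add_right _ _), hj⟩
    have hmeasCS : ∀ p : ℕ × α,
        MeasurableSet {w | w ∈ C n p ∧ (fun k => w (p.1 + k)) ∈ hit} := by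
      intro p
      have hshiftm : Measurable fun (w : ℕ → α) => (fun k => w (p.1 + k)) :=
        measurable_pi_lambda _ fun k => measurable_pi_apply _
      exact (hCmeas n p).inter (hshiftm hmeashit)
    have hdisjCS : Pairwise (Function.onFun Disjoint fun p : ℕ × α =>
        {w | w ∈ C n p ∧ (fun k => w (p.1 + k)) ∈ hit}) := by
      intro p q hne
      have := hCdisj n hne
      rw [Function.onFun] at this ⊢
      refine Disjoint.mono ?_ ?_ this
      · intro w hw; exact hw.1
      · intro w hw; exact hw.1
    calc μ x T * ((1 : ENNReal) / 2)
        ≤ μ x (⋃ p : ℕ × α, C n p) * ((1 : ENNReal) / 2) :=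
          mul_le_mul_left (measure_mono (hTsub n)) _
      _ = (∑' p : ℕ × α, μ x (C n p)) * ((1 : ENNReal) / 2) := by
          rw [measure_iUnion (hCdisj n) (hCmeas n)]
      _ = ∑' p : ℕ × α, μ x (C n p) * ((1 : ENNReal) / 2) := by
          rw [ENNReal.tsum_mul_right]
      _ ≤ ∑' p : ℕ × α, μ x {w | w ∈ C n p ∧ (fun k => w (p.1 + k)) ∈ hit} :=
          ENNReal.tsum_le_tsum hterm
      _ = μ x (⋃ p : ℕ × α, {w | w ∈ C n p ∧ (fun k => w (p.1 + k)) ∈ hit}) :=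
          (measure_iUnion hdisjCS hmeasCS).symm
      _ ≤ μ x (G n) := measure_mono (Set.iUnion_subset hsubG)
  -- μ x (⋂ n, G n) = 0
  have hGcap : μ x (⋂ n, G n) = 0 := by
    have hsub : (⋂ n, G n) ⊆ ⋃ y ∈ K, {w : ℕ → α | {n | w n = y}.Infinite} := by
      intro w hw
      have hinf : {m | w m ∈ K}.Infinite := by
        intro hfin
        obtain ⟨N, hN⟩ := hfin.bddAbove
        obtain ⟨m, hm, hmK⟩ := Set.mem_iInter.mp hw (N + 1)
        have := hN hmK
        omega
      have : {m | w m ∈ K} = ⋃ y ∈ K, {m | w m = y} := by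
        ext m; simp
      by_contra hcon
      apply hinf
      rw [this]
      refine Set.Finite.biUnion hK fun y hy => ?_
      rcases Set.finite_or_infinite {m | w m = y} with hf | hinf2
      · exact hf
      · exact absurd (Set.mem_biUnion hy hinf2) hcon
    refine measure_mono_null hsub ?_
    rw [measure_biUnion_null_iff hK.countable]
    exact fun y _ => htrans x y
  -- conclude by continuity from above
  have : IsProbabilityMeasure (μ x) := hprob x
  have htend : Filter.Tendsto (fun n => μ x (G n)) Filter.atTop (nhds 0) := by
    have := tendsto_measure_iInter_atTop (μ := μ x) (s := G)
      (fun n => (hGmeas n).nullMeasurableSet) hGanti ⟨0, measure_ne_top _ _⟩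
    rwa [hGcap] at this
  have hle : μ x T * ((1 : ENNReal) / 2) ≤ 0 :=
    ge_of_tendsto' htend hkey
  have h2 : μ x T * ((1 : ENNReal) / 2) = 0 := le_antisymm hle zero_le
  rcases mul_eq_zero.mp h2 with h | h
  · exact h
  · exfalso
    have : (1 : ENNReal) / 2 ≠ 0 := by norm_num
    exact this h
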